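/- For a bounded operator T and k ≥ 1, (TT*)^k attains its norm if and only if TT* attains its norm if and only if T attains its norm. -/

import Mathlib

open ContinuousLinearMap

local notation "⟪" x ", " y "⟫" => @inner ℂ _ _ x y

/-- For a self-adjoint element of a C*-algebra, `‖a ^ k‖ = ‖a‖ ^ k`. -/
lemma sa_norm_pow {E : Type*} [NormedRing E] [StarRing E] [CStarRing E] {a : E}
    (ha : IsSelfAdjoint a) {k : ℕ} (hk : 1 ≤ k) : ‖a ^ k‖ = ‖a‖ ^ k := by
  rcases eq_or_ne ‖a‖ 0 with h0 | h0
  · have ha0 : a = 0 := norm_eq_zero.mp h0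
    subst ha0
    simp [zero_pow (by omega : k ≠ 0)]
  have hpos : 0 < ‖a‖ := (norm_nonneg a).lt_of_ne' h0
  refine le_antisymm (norm_pow_le' a (by omega)) ?_
  have h2 : ‖a ^ 2 ^ k‖ = ‖a‖ ^ 2 ^ k := by
    have := ha.nnnorm_pow_two_pow k
    simpa using congrArg NNReal.toReal this
  have hk2 : k < 2 ^ k := Nat.lt_two_pow_self
  have hsplit : a ^ 2 ^ k = a ^ k * a ^ (2 ^ k - k) := by
    rw [← pow_add]; congr 1; omega
  have hle : ‖a‖ ^ k * ‖a‖ ^ (2 ^ k - k) ≤ ‖a ^ k‖ * ‖a‖ ^ (2 ^ k - k) := by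
    calc ‖a‖ ^ k * ‖a‖ ^ (2 ^ k - k) = ‖a‖ ^ 2 ^ k := by rw [← pow_add]; congr 1; omega
    _ = ‖a ^ 2 ^ k‖ := h2.symm
    _ ≤ ‖a ^ k‖ * ‖a ^ (2 ^ k - k)‖ := by rw [hsplit]; exact norm_mul_le _ _
    _ ≤ ‖a ^ k‖ * ‖a‖ ^ (2 ^ k - k) :=
        mul_le_mul_of_nonneg_left (norm_pow_le' a (by omega)) (norm_nonneg _)
  exact le_of_mul_le_mul_right hle (pow_pos hpos _)

/-- If `T` attains its norm, so does its adjoint. -/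
lemma na_adjoint {H : Type*} [NormedAddCommGroup H] [InnerProductSpace ℂ H] [CompleteSpace H]
    {T : H →L[ℂ] H} (h : ∃ x : H, ‖x‖ = 1 ∧ ‖T x‖ = ‖T‖) :
    ∃ y : H, ‖y‖ = 1 ∧ ‖adjoint T y‖ = ‖adjoint T‖ := by
  obtain ⟨x, hx, hTx⟩ := h
  have hadj : ‖adjoint T‖ = ‖T‖ := ContinuousLinearMap.adjoint.norm_map T
  rcases eq_or_ne ‖T‖ 0 with h0 | h0
  · have hT0 : T = 0 := norm_eq_zero.mp h0
    exact ⟨x, hx, by simp [hT0]⟩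
  have hpos : 0 < ‖T‖ := (norm_nonneg T).lt_of_ne' h0
  refine ⟨(‖T‖ : ℂ)⁻¹ • T x, ?_, ?_⟩
  · rw [norm_smul, hTx]
    simp [abs_of_pos hpos, inv_mul_cancel₀ h0]
  · have hinner : ⟪adjoint T (T x), x⟫ = ((‖T x‖ : ℂ)) ^ 2 := by
      rw [adjoint_inner_left, inner_self_eq_norm_sq_to_K]; norm_cast
    have key : ‖T‖ ^ 2 ≤ ‖adjoint T (T x)‖ := by
      calc ‖T‖ ^ 2 = ‖⟪adjoint T (T x), x⟫‖ := by
            rw [hinner, ← hTx, norm_pow, Complex.norm_real,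
              Real.norm_of_nonneg (norm_nonneg _)]
      _ ≤ ‖adjoint T (T x)‖ * ‖x‖ := norm_inner_le_norm _ _
      _ = ‖adjoint T (T x)‖ := by rw [hx, mul_one]
    have hle : ‖adjoint T ((‖T‖ : ℂ)⁻¹ • T x)‖ ≤ ‖adjoint T‖ := by
      calc ‖adjoint T ((‖T‖ : ℂ)⁻¹ • T x)‖ ≤ ‖adjoint T‖ * ‖(‖T‖ : ℂ)⁻¹ • T x‖ :=
            le_opNorm _ _
      _ = ‖adjoint T‖ := by
            rw [norm_smul, hTx]
            simp [abs_of_pos hpos, inv_mul_cancel₀ h0]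
    have hge : ‖adjoint T‖ ≤ ‖adjoint T ((‖T‖ : ℂ)⁻¹ • T x)‖ := by
      rw [map_smul, norm_smul]
      have : ‖((‖T‖ : ℂ))⁻¹‖ = ‖T‖⁻¹ := by
        simp [abs_of_pos hpos]
      rw [this, hadj]
      calc ‖T‖ = ‖T‖⁻¹ * ‖T‖ ^ 2 := by field_simp
      _ ≤ ‖T‖⁻¹ * ‖adjoint T (T x)‖ :=
            mul_le_mul_of_nonneg_left key (by positivity)
    exact le_antisymm hle hge

/-- If `T` attains its norm at `x`, then `T† T` attains its norm at `x`. -/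
lemma na_comp {H : Type*} [NormedAddCommGroup H] [InnerProductSpace ℂ H] [CompleteSpace H]
    {T : H →L[ℂ] H} (h : ∃ x : H, ‖x‖ = 1 ∧ ‖T x‖ = ‖T‖) :
    ∃ x : H, ‖x‖ = 1 ∧ ‖(adjoint T * T) x‖ = ‖adjoint T * T‖ := by
  obtain ⟨x, hx, hTx⟩ := h
  have hnorm : ‖adjoint T * T‖ = ‖T‖ * ‖T‖ := norm_adjoint_comp_self T
  refine ⟨x, hx, le_antisymm (by simpa using le_opNorm (adjoint T * T) x |>.trans (by rw [hx, mul_one])) ?_⟩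
  have hinner : ⟪(adjoint T * T) x, x⟫ = ((‖T x‖ : ℂ)) ^ 2 := by
    have : (adjoint T * T) x = adjoint T (T x) := rfl
    rw [this, adjoint_inner_left, inner_self_eq_norm_sq_to_K]; norm_cast
  calc ‖adjoint T * T‖ = ‖⟪(adjoint T * T) x, x⟫‖ := by
        rw [hinner, hnorm, ← hTx, norm_pow, Complex.norm_real,
          Real.norm_of_nonneg (norm_nonneg _), sq]
  _ ≤ ‖(adjoint T * T) x‖ * ‖x‖ := norm_inner_le_norm _ _
  _ = ‖(adjoint T * T) x‖ := by rw [hx, mul_one]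

/-- If `T† T` attains its norm at `x`, then `T` attains its norm at `x`. -/
lemma na_of_comp {H : Type*} [NormedAddCommGroup H] [InnerProductSpace ℂ H] [CompleteSpace H]
    {T : H →L[ℂ] H} (h : ∃ x : H, ‖x‖ = 1 ∧ ‖(adjoint T * T) x‖ = ‖adjoint T * T‖) :
    ∃ x : H, ‖x‖ = 1 ∧ ‖T x‖ = ‖T‖ := by
  obtain ⟨x, hx, hSx⟩ := h
  rcases eq_or_ne ‖T‖ 0 with h0 | h0
  · exact ⟨x, hx, by simp [norm_eq_zero.mp h0]⟩
  have hpos : 0 < ‖T‖ := (norm_nonneg T).lt_of_ne' h0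
  have hnorm : ‖adjoint T * T‖ = ‖T‖ * ‖T‖ := norm_adjoint_comp_self T
  have hadj : ‖adjoint T‖ = ‖T‖ := ContinuousLinearMap.adjoint.norm_map T
  refine ⟨x, hx, le_antisymm (by simpa [hx] using le_opNorm T x) ?_⟩
  have : ‖T‖ * ‖T‖ ≤ ‖T‖ * ‖T x‖ := by
    calc ‖T‖ * ‖T‖ = ‖(adjoint T * T) x‖ := by rw [hSx, hnorm]
    _ = ‖adjoint T (T x)‖ := rfl
    _ ≤ ‖adjoint T‖ * ‖T x‖ := le_opNorm _ _
    _ = ‖T‖ * ‖T x‖ := by rw [hadj]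
  exact le_of_mul_le_mul_left this hpos

/-- If a self-adjoint `S` attains its norm at `x`, then `S (S x) = ‖S‖² x`. -/
lemma sa_sq_apply {H : Type*} [NormedAddCommGroup H] [InnerProductSpace ℂ H] [CompleteSpace H]
    {S : H →L[ℂ] H} (hS : IsSelfAdjoint S) {x : H} (hx : ‖x‖ = 1) (hSx : ‖S x‖ = ‖S‖) :
    S (S x) = ((‖S‖ ^ 2 : ℝ) : ℂ) • x := by
  have hinner : ⟪S (S x), x⟫ = ((‖S x‖ : ℂ)) ^ 2 := by
    have h := adjoint_inner_left S x (S x)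
    rw [isSelfAdjoint_iff'.mp hS] at h
    rw [h, inner_self_eq_norm_sq_to_K]; norm_cast
  have hre : RCLike.re ⟪S (S x), ((‖S‖ ^ 2 : ℝ) : ℂ) • x⟫ = ‖S‖ ^ 4 := by
    rw [inner_smul_right, hinner, hSx]
    norm_cast
    simp [← Complex.ofReal_pow]; ring
  have h1 : ‖S (S x)‖ ≤ ‖S‖ ^ 2 := by
    calc ‖S (S x)‖ ≤ ‖S‖ * ‖S x‖ := le_opNorm _ _
    _ = ‖S‖ ^ 2 := by rw [hSx, sq]
  have h2 : ‖((‖S‖ ^ 2 : ℝ) : ℂ) • x‖ = ‖S‖ ^ 2 := by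
    rw [norm_smul, hx, mul_one, Complex.norm_real, Real.norm_of_nonneg (by positivity)]
  have hexp := @norm_sub_sq ℂ _ _ _ _ (S (S x)) (((‖S‖ ^ 2 : ℝ) : ℂ) • x)
  have hzero : ‖S (S x) - ((‖S‖ ^ 2 : ℝ) : ℂ) • x‖ ^ 2 ≤ 0 := by
    rw [hexp, hre, h2]
    nlinarith [norm_nonneg (S (S x))]
  have : ‖S (S x) - ((‖S‖ ^ 2 : ℝ) : ℂ) • x‖ = 0 := by
    nlinarith [norm_nonneg (S (S x) - ((‖S‖ ^ 2 : ℝ) : ℂ) • x)]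
  rwa [norm_eq_zero, sub_eq_zero] at this

/-- If a self-adjoint `S` attains its norm, then so does `S ^ k`. -/
lemma na_pow {H : Type*} [NormedAddCommGroup H] [InnerProductSpace ℂ H] [CompleteSpace H]
    {S : H →L[ℂ] H} (hS : IsSelfAdjoint S) {k : ℕ} (hk : 1 ≤ k)
    (h : ∃ x : H, ‖x‖ = 1 ∧ ‖S x‖ = ‖S‖) :
    ∃ x : H, ‖x‖ = 1 ∧ ‖(S ^ k) x‖ = ‖S ^ k‖ := by
  obtain ⟨x, hx, hSx⟩ := h
  have hsq := sa_sq_apply hS hx hSx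
  have hstep : ∀ n, (S ^ (n + 2)) x = ((‖S‖ ^ 2 : ℝ) : ℂ) • (S ^ n) x := by
    intro n
    have hp : S ^ (n + 2) = S ^ n * S ^ 2 := by rw [← pow_add]
    rw [hp, mul_apply_eq_comp]
    have : (S ^ 2) x = S (S x) := by rw [sq, mul_apply_eq_comp]
    rw [this, hsq, map_smul]
  have hnorms : ∀ n, ‖(S ^ n) x‖ = ‖S‖ ^ n ∧ ‖(S ^ (n + 1)) x‖ = ‖S‖ ^ (n + 1) := by
    intro n
    induction n with
    | zero => simp [hx, hSx]
    | succ n ih =>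
      refine ⟨ih.2, ?_⟩
      rw [show n + 1 + 1 = n + 2 from rfl, hstep n, norm_smul, ih.1,
        Complex.norm_real, Real.norm_of_nonneg (by positivity)]
      ring
  exact ⟨x, hx, by rw [(hnorms k).1, sa_norm_pow hS hk]⟩

/-- If `S ^ k` attains its norm for self-adjoint `S`, then `S` attains its norm. -/
lemma na_of_pow {H : Type*} [NormedAddCommGroup H] [InnerProductSpace ℂ H] [CompleteSpace H]
    {S : H →L[ℂ] H} (hS : IsSelfAdjoint S) {k : ℕ} (hk : 1 ≤ k)
    (h : ∃ x : H, ‖x‖ = 1 ∧ ‖(S ^ k) x‖ = ‖S ^ k‖) :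
    ∃ x : H, ‖x‖ = 1 ∧ ‖S x‖ = ‖S‖ := by
  obtain ⟨x, hx, hkx⟩ := h
  rcases eq_or_ne ‖S‖ 0 with h0 | h0
  · exact ⟨x, hx, by simp [norm_eq_zero.mp h0]⟩
  have hpos : 0 < ‖S‖ := (norm_nonneg S).lt_of_ne' h0
  have claim : ∀ j, ‖(S ^ (j + 1)) x‖ = ‖S‖ ^ (j + 1) → ‖S x‖ = ‖S‖ := by
    intro j
    induction j with
    | zero => intro hj; simpa using hj
    | succ j ih =>
      intro hj
      apply ih
      have hle : ‖(S ^ (j + 1)) x‖ ≤ ‖S‖ ^ (j + 1) := by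
        calc ‖(S ^ (j + 1)) x‖ ≤ ‖S ^ (j + 1)‖ * ‖x‖ := le_opNorm _ _
        _ = ‖S ^ (j + 1)‖ := by rw [hx, mul_one]
        _ = ‖S‖ ^ (j + 1) := sa_norm_pow hS (by omega)
      have hge : ‖S‖ ^ (j + 1) ≤ ‖(S ^ (j + 1)) x‖ := by
        have : ‖S‖ * ‖S‖ ^ (j + 1) ≤ ‖S‖ * ‖(S ^ (j + 1)) x‖ := by
          calc ‖S‖ * ‖S‖ ^ (j + 1) = ‖S‖ ^ (j + 2) := by ring
          _ = ‖(S ^ (j + 2)) x‖ := hj.symm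
          _ = ‖S ((S ^ (j + 1)) x)‖ := by rw [pow_succ', mul_apply_eq_comp]
          _ ≤ ‖S‖ * ‖(S ^ (j + 1)) x‖ := le_opNorm _ _
        exact le_of_mul_le_mul_left this hpos
      exact le_antisymm hle hge
  obtain ⟨j, rfl⟩ : ∃ j, k = j + 1 := ⟨k - 1, by omega⟩
  refine ⟨x, hx, claim j ?_⟩
  rw [hkx, sa_norm_pow hS hk]

/-- For a bounded operator `T` on a complex Hilbert space and `k ≥ 1`, `(T T*)^k` attains
its norm if and only if `T T*` attains its norm, if and only if `T` attains its norm. -/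
theorem pow_self_comp_adjoint_normAttain_iff
    {H : Type*} [NormedAddCommGroup H] [InnerProductSpace ℂ H] [CompleteSpace H]
    (T : H →L[ℂ] H) (k : ℕ) (hk : 1 ≤ k) :
    ((∃ x : H, ‖x‖ = 1 ∧
        ‖((T * ContinuousLinearMap.adjoint T) ^ k) x‖ =
          ‖(T * ContinuousLinearMap.adjoint T) ^ k‖) ↔
      (∃ x : H, ‖x‖ = 1 ∧
        ‖(T * ContinuousLinearMap.adjoint T) x‖ = ‖T * ContinuousLinearMap.adjoint T‖)) ∧
    ((∃ x : H, ‖x‖ = 1 ∧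
        ‖(T * ContinuousLinearMap.adjoint T) x‖ = ‖T * ContinuousLinearMap.adjoint T‖) ↔
      (∃ x : H, ‖x‖ = 1 ∧ ‖T x‖ = ‖T‖)) := by
  have hS : IsSelfAdjoint (T * ContinuousLinearMap.adjoint T) := by
    simpa [star_eq_adjoint] using (IsSelfAdjoint.mul_star_self T)
  have hrw : T * ContinuousLinearMap.adjoint T
      = adjoint (adjoint T) * adjoint T := by rw [adjoint_adjoint]
  constructor
  · exact ⟨na_of_pow hS hk, na_pow hS hk⟩
  · constructor
    · intro h
      rw [hrw] at h
      have := na_of_comp h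
      simpa [adjoint_adjoint] using na_adjoint this
    · intro h
      rw [hrw]
      exact na_comp (na_adjoint h)
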